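/- Let D > 0, n ≥ 1, and z_1 ≥ z_2 ≥ ... ≥ z_n ≥ 0. If n⊥ and n⊤ in {1,...,n} both satisfy the threshold condition (z_i > (Σ_{j≤m} z_j)/(m+D) for all i ≤ m and z_i ≤ (Σ_{j≤m} z_j)/(m+D) for all i > m, with m = n⊥ resp. m = n⊤), then n⊥ = n⊤. -/

import Mathlib

theorem stmt5 (D : ℝ) (hD : 0 < D) (n : ℕ) (hn : 1 ≤ n)
    (z : ℕ → ℝ)
    (hsort : ∀ i j, 1 ≤ i → i ≤ j → j ≤ n → z j ≤ z i)
    (hnn : ∀ i, 1 ≤ i → i ≤ n → 0 ≤ z i)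
    (m₁ m₂ : ℕ) (hm₁ : 1 ≤ m₁) (hm₁n : m₁ ≤ n) (hm₂ : 1 ≤ m₂) (hm₂n : m₂ ≤ n)
    (hwin₁ : ∀ i, 1 ≤ i → i ≤ m₁ → z i > (∑ j ∈ Finset.Icc 1 m₁, z j) / ((m₁ : ℝ) + D))
    (hlose₁ : ∀ i, m₁ < i → i ≤ n → z i ≤ (∑ j ∈ Finset.Icc 1 m₁, z j) / ((m₁ : ℝ) + D))
    (hwin₂ : ∀ i, 1 ≤ i → i ≤ m₂ → z i > (∑ j ∈ Finset.Icc 1 m₂, z j) / ((m₂ : ℝ) + D))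
    (hlose₂ : ∀ i, m₂ < i → i ≤ n → z i ≤ (∑ j ∈ Finset.Icc 1 m₂, z j) / ((m₂ : ℝ) + D)) :
    m₁ = m₂ := by
  by_contra hne
  wlog h : m₁ < m₂ generalizing m₁ m₂
  · exact this m₂ m₁ hm₂ hm₂n hm₁ hm₁n hwin₂ hlose₂ hwin₁ hlose₁ (Ne.symm hne) (by omega)
  set S₁ := ∑ j ∈ Finset.Icc 1 m₁, z j with hS₁def
  set S₂ := ∑ j ∈ Finset.Icc 1 m₂, z j with hS₂def
  have hm₂D : (0:ℝ) < (m₂ : ℝ) + D := by positivity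
  have hm₁D : (0:ℝ) < (m₁ : ℝ) + D := by positivity
  have hz1 : z (m₁+1) ≤ S₁ / ((m₁ : ℝ) + D) := hlose₁ _ (by omega) (by omega)
  have hz2 : z (m₁+1) > S₂ / ((m₂ : ℝ) + D) := hwin₂ _ (by omega) (by omega)
  have hTT : S₂ / ((m₂:ℝ)+D) < S₁ / ((m₁:ℝ)+D) := lt_of_lt_of_le hz2 hz1
  have hsplit : S₂ = S₁ + ∑ j ∈ Finset.Icc (m₁+1) m₂, z j := by
    rw [hS₁def, hS₂def, ← Finset.sum_union]
    · congr 1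
      ext x
      simp only [Finset.mem_Icc, Finset.mem_union]
      omega
    · rw [Finset.disjoint_left]
      intro a ha hb
      simp only [Finset.mem_Icc] at ha hb
      omega
  have hcard : (Finset.Icc (m₁+1) m₂).card = m₂ - m₁ := by
    rw [Nat.card_Icc]; omega
  have hsum : ((m₂ - m₁ : ℕ) : ℝ) * (S₂ / ((m₂:ℝ)+D)) < ∑ j ∈ Finset.Icc (m₁+1) m₂, z j := by
    have := Finset.sum_lt_sum_of_nonempty (s := Finset.Icc (m₁+1) m₂)
      (f := fun _ => S₂/((m₂:ℝ)+D)) (g := z)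
      ⟨m₁+1, by simp only [Finset.mem_Icc]; omega⟩
      (fun i hi => by
        simp only [Finset.mem_Icc] at hi
        exact hwin₂ i (by omega) hi.2)
    simpa [Finset.sum_const, hcard, nsmul_eq_mul] using this
  have hcast : ((m₂ - m₁ : ℕ) : ℝ) = (m₂ : ℝ) - (m₁ : ℝ) := by
    push_cast [Nat.cast_sub h.le]; ring
  rw [hcast] at hsum
  have hS₂eq : S₂ = S₂ / ((m₂:ℝ)+D) * ((m₂:ℝ)+D) := by
    field_simp
  have hgt : S₂ / ((m₂:ℝ)+D) * ((m₁:ℝ)+D) > S₁ := by nlinarith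
  have : S₁ / ((m₁:ℝ)+D) < S₂ / ((m₂:ℝ)+D) := by
    rw [div_lt_iff₀ hm₁D]
    linarith
  linarith
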